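/- Let Q₀, …, Qₙ ∈ ℝ[x,y] be a reflexive polynomial vector and let H be a real symmetric centrosymmetric positive definite matrix of size (n+1)×(n+1). Define Pₖ = Σ_{j=0}^{n} ((H^{1/2})⁻¹)_{kj} Qⱼ for k = 0, …, n, where H^{1/2} is the unique symmetric positive semidefinite square root of H. Then P₀, …, Pₙ is a reflexive polynomial vector, i.e., σ(Pₖ) = P_{n−k} for all k. -/

import Mathlib

open Matrix MvPolynomial

/-- The ℝ-algebra automorphism of `ℝ[x,y]` interchanging the two variables. -/
noncomputable def swapVars : MvPolynomial (Fin 2) ℝ →ₐ[ℝ] MvPolynomial (Fin 2) ℝ :=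
  MvPolynomial.rename ⇑(Equiv.swap (0 : Fin 2) 1)

open scoped ComplexOrder in
/-- The positive semidefinite square root, as `Matrix.PosSemidef.sqrt` was defined in the older
Mathlib (it has since been removed). -/
noncomputable def Matrix.PosSemidef.sqrt {n 𝕜 : Type*} [Fintype n] [DecidableEq n] [RCLike 𝕜]
    {A : Matrix n n 𝕜} (hA : A.PosSemidef) : Matrix n n 𝕜 :=
  hA.1.eigenvectorUnitary.1 * diagonal ((↑) ∘ Real.sqrt ∘ hA.1.eigenvalues) *
  (star hA.1.eigenvectorUnitary : Matrix n n 𝕜)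

open scoped ComplexOrder MatrixOrder in
theorem Matrix.PosSemidef.sqrt_eq_cfcSqrt {n 𝕜 : Type*} [Fintype n] [DecidableEq n] [RCLike 𝕜]
    {A : Matrix n n 𝕜} (hA : A.PosSemidef) : hA.sqrt = CFC.sqrt A := by
  rw [CFC.sqrt_eq_real_sqrt A hA.nonneg,
    cfcₙ_eq_cfc (hf := Real.continuous_sqrt.continuousOn) (hf0 := Real.sqrt_zero), hA.1.cfc_eq, Matrix.IsHermitian.cfc,
    Unitary.conjStarAlgAut_apply]
  rfl

open scoped ComplexOrder MatrixOrder in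
theorem Matrix.PosSemidef.posSemidef_sqrt {n 𝕜 : Type*} [Fintype n] [DecidableEq n] [RCLike 𝕜]
    {A : Matrix n n 𝕜} (hA : A.PosSemidef) : hA.sqrt.PosSemidef := by
  rw [hA.sqrt_eq_cfcSqrt]
  exact (CFC.sqrt_nonneg A).posSemidef

open scoped ComplexOrder MatrixOrder in
theorem Matrix.PosSemidef.sq_sqrt {n 𝕜 : Type*} [Fintype n] [DecidableEq n] [RCLike 𝕜]
    {A : Matrix n n 𝕜} (hA : A.PosSemidef) : hA.sqrt ^ 2 = A := by
  rw [hA.sqrt_eq_cfcSqrt]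
  exact CFC.sq_sqrt A hA.nonneg

open scoped ComplexOrder MatrixOrder in
theorem Matrix.PosSemidef.eq_sqrt_of_sq_eq {n 𝕜 : Type*} [Fintype n] [DecidableEq n] [RCLike 𝕜]
    {A : Matrix n n 𝕜} (hA : A.PosSemidef) {B : Matrix n n 𝕜} (hB : B.PosSemidef)
    (hAB : A ^ 2 = B) : A = hB.sqrt := by
  rw [hB.sqrt_eq_cfcSqrt]
  exact (CFC.sqrt_unique (by rw [← sq, hAB]) hA.nonneg).symm

/-- A real matrix `H` is centrosymmetric if `hᵢⱼ = h_{n-i, n-j}` for all `i`, `j`. -/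
def Centrosymmetric {m n : ℕ} (H : Matrix (Fin m) (Fin n) ℝ) : Prop :=
  ∀ i j, H i j = H i.rev j.rev

/-- If `Q₀, …, Qₙ` is a reflexive polynomial vector and `H` is a symmetric
centrosymmetric positive definite matrix, then the polynomials
`Pₖ = Σⱼ ((H^(1/2))⁻¹)ₖⱼ Qⱼ` (with `H^(1/2)` the positive semidefinite square root of
`H`) form a reflexive polynomial vector: `σ(Pₖ) = P_{n-k}`. -/
theorem orthonormal_vector_reflexive (n : ℕ)
    (Q : Fin (n + 1) → MvPolynomial (Fin 2) ℝ)
    (hQ : ∀ k, swapVars (Q k) = Q k.rev)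
    (H : Matrix (Fin (n + 1)) (Fin (n + 1)) ℝ)
    (hsym : H.IsSymm) (hpd : H.PosDef) (hc : Centrosymmetric H) :
    ∀ k : Fin (n + 1),
      swapVars (∑ j, ((hpd.posSemidef.sqrt)⁻¹) k j • Q j) =
        ∑ j, ((hpd.posSemidef.sqrt)⁻¹) k.rev j • Q j := by
  set S := hpd.posSemidef.sqrt with hS
  -- The square root is centrosymmetric.
  have hsub : S.submatrix ⇑(Fin.revPerm : Equiv.Perm (Fin (n+1)))
      ⇑(Fin.revPerm : Equiv.Perm (Fin (n+1))) = S := by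
    have hps : (S.submatrix ⇑(Fin.revPerm : Equiv.Perm (Fin (n+1)))
        ⇑(Fin.revPerm : Equiv.Perm (Fin (n+1)))).PosSemidef :=
      hpd.posSemidef.posSemidef_sqrt.submatrix _
    have hsq : (S.submatrix ⇑(Fin.revPerm : Equiv.Perm (Fin (n+1)))
        ⇑(Fin.revPerm : Equiv.Perm (Fin (n+1)))) ^ 2 = H := by
      rw [pow_two, Matrix.submatrix_mul_equiv, ← pow_two, hpd.posSemidef.sq_sqrt]
      ext i j
      simp only [Matrix.submatrix_apply, Fin.revPerm_apply]
      exact (hc i j).symm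
    exact hps.eq_sqrt_of_sq_eq hpd.posSemidef hsq
  -- Hence its inverse is centrosymmetric.
  have hinv : ∀ i j : Fin (n + 1), S⁻¹ i j = S⁻¹ i.rev j.rev := by
    intro i j
    have h2 : S⁻¹ = S⁻¹.submatrix ⇑(Fin.revPerm : Equiv.Perm (Fin (n+1)))
        ⇑(Fin.revPerm : Equiv.Perm (Fin (n+1))) := by
      conv_lhs => rw [← hsub]
      exact Matrix.inv_submatrix_equiv S _ _
    conv_lhs => rw [h2]
    simp
  intro k
  rw [map_sum]
  refine Fintype.sum_equiv Fin.revPerm _ _ fun j => ?_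
  rw [_root_.map_smul, hQ j]
  simp only [Fin.revPerm_apply]
  rw [← hinv k j]
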